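/- For every finite nonempty set P ⊆ ℝⁿ and every labeling y : P → {−1, 1}, there exists ρ > 0 such that for every probability distribution D on P there is a single-threshold linear classifier h with Σ_{p∈P} D(p)·1[h(p) = y(p)] ≥ 1/2 + ρ. (Weak learnability of the class of single-threshold classifiers, binary-label case.) -/

import Mathlib

/-- A single-threshold (linear) classifier on ℝⁿ with values in `A`:
there are labels `aPlus`, `aMinus`, a direction `lam` and a threshold `om` such that
the classifier outputs `aPlus` on the closed half-space `{p : lam ⬝ p ≥ om}` and
`aMinus` elsewhere. -/
def IsSingleThreshold {n : ℕ} {A : Type*} (h : (Fin n → ℝ) → A) : Prop :=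
  ∃ (aPlus aMinus : A) (lam : Fin n → ℝ) (om : ℝ),
    ∀ p, h p = if om ≤ ∑ i, lam i * p i then aPlus else aMinus

/-- There is a linear functional injective on a finite set of points. -/
lemma exists_injOn_functional {n : ℕ} (P : Finset (Fin n → ℝ)) :
    ∃ lam : Fin n → ℝ, Set.InjOn (fun p : Fin n → ℝ => ∑ i, lam i * p i) ↑P := by
  classical
  set K : (Fin n → ℝ) → Subspace ℝ (Fin n → ℝ) :=
    fun v => LinearMap.ker (∑ i, v i • LinearMap.proj (R := ℝ) (φ := fun _ : Fin n => ℝ) i) with hK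
  have hmem : ∀ v lam, lam ∈ K v ↔ ∑ i, v i * lam i = 0 := by
    intro v lam
    simp [hK, LinearMap.mem_ker, LinearMap.sum_apply, LinearMap.smul_apply, LinearMap.proj_apply,
      smul_eq_mul]
  have hproper : ∀ v : Fin n → ℝ, v ≠ 0 → K v ≠ ⊤ := by
    intro v hv htop
    obtain ⟨j, hj⟩ := Function.ne_iff.mp hv
    have : Pi.single j (1:ℝ) ∈ K v := htop ▸ Submodule.mem_top
    rw [hmem] at this
    simp [Pi.single_apply, mul_ite, Finset.sum_ite_eq'] at this
    exact hj this
  set s : Finset (Subspace ℝ (Fin n → ℝ)) :=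
    ((P ×ˢ P).filter fun pq => pq.1 ≠ pq.2).image (fun pq => K (pq.1 - pq.2)) with hs
  have htopnm : ⊤ ∉ s := by
    intro htop
    rw [hs, Finset.mem_image] at htop
    obtain ⟨pq, hpq, heq⟩ := htop
    rw [Finset.mem_filter] at hpq
    exact hproper _ (sub_ne_zero.mpr hpq.2) heq
  have hne := Subspace.biUnion_ne_univ_of_top_notMem htopnm
  rw [Set.ne_univ_iff_exists_notMem] at hne
  obtain ⟨lam, hlam⟩ := hne
  simp only [Set.mem_iUnion, not_exists, SetLike.mem_coe] at hlam
  refine ⟨lam, ?_⟩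
  intro p hp q hq hfeq
  by_contra hne'
  have hsmem : K (p - q) ∈ s := by
    rw [hs, Finset.mem_image]
    exact ⟨(p, q), Finset.mem_filter.mpr ⟨Finset.mem_product.mpr ⟨hp, hq⟩, hne'⟩, rfl⟩
  apply hlam _ hsmem
  rw [hmem]
  simp only [Pi.sub_apply]
  have : ∑ i, (p i - q i) * lam i = ∑ i, lam i * p i - ∑ i, lam i * q i := by
    rw [← Finset.sum_sub_distrib]; congr 1; ext i; ring
  rw [this]
  simp only at hfeq
  rw [hfeq]; simp

/-- Weak learnability of the class of single-threshold classifiers (binary-label case):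
for every finite nonempty `P ⊆ ℝⁿ` and labeling `y : P → {−1,1}`, there is `ρ > 0` such
that for every probability distribution `D` on `P` some single-threshold classifier with
values in `{−1,1}` is correct with `D`-probability at least `1/2 + ρ`. -/
theorem single_threshold_weak_learnability {n : ℕ}
    (P : Finset (Fin n → ℝ)) (hP : P.Nonempty)
    (y : (Fin n → ℝ) → ℝ) (hy : ∀ p ∈ P, y p = 1 ∨ y p = -1) :
    ∃ ρ : ℝ, 0 < ρ ∧
      ∀ D : (Fin n → ℝ) → ℝ, (∀ p ∈ P, 0 ≤ D p) → (∑ p ∈ P, D p = 1) →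
        ∃ h : (Fin n → ℝ) → ℝ, IsSingleThreshold h ∧ (∀ p, h p = 1 ∨ h p = -1) ∧
          1 / 2 + ρ ≤ ∑ p ∈ P, D p * (if h p = y p then (1 : ℝ) else 0) := by
  classical
  obtain ⟨lam, hinj⟩ := exists_injOn_functional P
  set f : (Fin n → ℝ) → ℝ := fun p => ∑ i, lam i * p i with hf
  have hm : (0:ℝ) < (P.card : ℝ) := by exact_mod_cast Finset.card_pos.mpr hP
  set ρ : ℝ := 1 / (2 * P.card) with hρ
  have hρpos : 0 < ρ := by positivity
  refine ⟨ρ, hρpos, ?_⟩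
  intro D hD hD1
  by_contra hcon
  push_neg at hcon
  set A : ℝ → ℝ := fun t =>
    ∑ p ∈ P, D p * (if (if t ≤ f p then (1:ℝ) else -1) = y p then (1:ℝ) else 0) with hA
  have key : ∀ t : ℝ, 1/2 - ρ < A t ∧ A t < 1/2 + ρ := by
    intro t
    have h1 : A t < 1/2 + ρ := by
      apply hcon (fun p => if t ≤ f p then (1:ℝ) else -1)
      · exact ⟨1, -1, lam, t, fun p => rfl⟩
      · intro p; by_cases ht : t ≤ f p <;> simp [ht]
    have h2 : (∑ p ∈ P, D p * (if (if t ≤ f p then (-1:ℝ) else 1) = y p then (1:ℝ) else 0))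
        < 1/2 + ρ := by
      apply hcon (fun p => if t ≤ f p then (-1:ℝ) else 1)
      · exact ⟨-1, 1, lam, t, fun p => rfl⟩
      · intro p; by_cases ht : t ≤ f p <;> simp [ht]
    have hcompl : (∑ p ∈ P, D p * (if (if t ≤ f p then (-1:ℝ) else 1) = y p then (1:ℝ) else 0))
        = 1 - A t := by
      have : ∀ p ∈ P, D p * (if (if t ≤ f p then (-1:ℝ) else 1) = y p then (1:ℝ) else 0)
          = D p - D p * (if (if t ≤ f p then (1:ℝ) else -1) = y p then (1:ℝ) else 0) := by
        intro p hp
        rcases hy p hp with hyp | hyp <;> by_cases ht : t ≤ f p <;>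
          simp [hyp, ht] <;> norm_num
      rw [Finset.sum_congr rfl this, Finset.sum_sub_distrib, hD1, hA]
    rw [hcompl] at h2
    exact ⟨by linarith, h1⟩
  have hsmall : ∀ p ∈ P, D p < 2 * ρ := by
    intro p hp
    obtain ⟨t2, ht2⟩ : ∃ t2 : ℝ, ∀ q ∈ P, (t2 ≤ f q ↔ f p < f q) := by
      set Q : Finset (Fin n → ℝ) := P.filter (fun q => f p < f q) with hQ
      by_cases hQne : Q.Nonempty
      · refine ⟨(Q.image f).min' (hQne.image f), fun q hq => ?_⟩
        constructor
        · intro hle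
          obtain ⟨q0, hq0, hq0eq⟩ := Finset.mem_image.mp ((Q.image f).min'_mem (hQne.image f))
          have : f p < f q0 := (Finset.mem_filter.mp hq0).2
          calc f p < f q0 := this
            _ = _ := hq0eq
            _ ≤ f q := hle
        · intro hlt
          exact Finset.min'_le _ _ (Finset.mem_image_of_mem f (Finset.mem_filter.mpr ⟨hq, hlt⟩))
      · refine ⟨f p + 1, fun q hq => ?_⟩
        have hnot : ¬ f p < f q := fun hlt =>
          hQne ⟨q, Finset.mem_filter.mpr ⟨hq, hlt⟩⟩
        simp only [hnot, iff_false]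
        intro hle
        exact hnot (by linarith)
    have hdiff : A (f p) - A t2
        = D p * ((if (1:ℝ) = y p then (1:ℝ) else 0) - (if (-1:ℝ) = y p then (1:ℝ) else 0)) := by
      rw [hA, ← Finset.sum_sub_distrib]
      rw [Finset.sum_eq_single_of_mem p hp]
      · have h1 : f p ≤ f p := le_refl _
        have h2 : ¬ t2 ≤ f p := fun hle => lt_irrefl _ ((ht2 p hp).mp hle)
        rw [if_pos h1, if_neg h2, ← mul_sub]
      · intro q hq hne
        have hfne : f q ≠ f p := fun heq => hne (hinj hq hp heq)
        rcases hfne.lt_or_gt with hlt | hlt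
        · have h1 : ¬ f p ≤ f q := not_le.mpr hlt
          have h2 : ¬ t2 ≤ f q := fun hle => absurd ((ht2 q hq).mp hle) (not_lt.mpr hlt.le)
          rw [if_neg h1, if_neg h2, sub_self]
        · have h1 : f p ≤ f q := hlt.le
          have h2 : t2 ≤ f q := (ht2 q hq).mpr hlt
          rw [if_pos h1, if_pos h2, sub_self]
    have k1 := key (f p)
    have k2 := key t2
    rcases hy p hp with hyp | hyp
    · rw [hyp] at hdiff; norm_num at hdiff; linarith
    · rw [hyp] at hdiff; norm_num at hdiff; linarith
  have hlt : (1:ℝ) < 1 := by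
    calc (1:ℝ) = ∑ p ∈ P, D p := hD1.symm
      _ < ∑ _p ∈ P, 2 * ρ := Finset.sum_lt_sum_of_nonempty hP hsmall
      _ = P.card * (2 * ρ) := by rw [Finset.sum_const, nsmul_eq_mul]
      _ = 1 := by rw [hρ]; field_simp
  exact absurd hlt (lt_irrefl 1)
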